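/- (Pseudo-substitutivity of the Howe lifting) Suppose μ is a metric on terms such that μ(M[V/x], N[V/x]) ≤ μ(M,N) for all terms M, N and values V. Then for all terms M, N and values V, W: μ^H(M[V/x], N[W/x]) ≤ μ^H(M,N) + μ^H(V,W). -/

import Mathlib

noncomputable section
open Classical

/-- Terms of the affine probabilistic λ-calculus (named variables). -/
inductive Tm : Type where
  | var : ℕ → Tm
  | lam : ℕ → Tm → Tm
  | app : Tm → Tm → Tm
  | choice : Tm → Tm → Tm
  | omega : Tm
  deriving DecidableEq

/-- Capture-avoiding substitution of a closed term `V` for variable `x`. -/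
def Tm.subst (x : ℕ) (V : Tm) : Tm → Tm
  | .var y => if y = x then V else .var y
  | .lam y M => if y = x then .lam y M else .lam y (Tm.subst x V M)
  | .app M N => .app (Tm.subst x V M) (Tm.subst x V N)
  | .choice M N => .choice (Tm.subst x V M) (Tm.subst x V N)
  | .omega => .omega

/-- Values are abstractions. -/
def Tm.IsVal : Tm → Prop
  | .lam _ _ => True
  | _ => False

/-- The affine typing judgement `Γ ⊢ M`. -/
inductive Affine : Finset ℕ → Tm → Prop where
  | var {Γ : Finset ℕ} {x : ℕ} : x ∈ Γ → Affine Γ (.var x)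
  | lam {Γ : Finset ℕ} {x : ℕ} {M : Tm} : Affine (insert x Γ) M → Affine Γ (.lam x M)
  | app {Γ Δ : Finset ℕ} {M N : Tm} : Disjoint Γ Δ → Affine Γ M → Affine Δ N →
      Affine (Γ ∪ Δ) (.app M N)
  | choice {Γ : Finset ℕ} {M N : Tm} : Affine Γ M → Affine Γ N → Affine Γ (.choice M N)
  | omega {Γ : Finset ℕ} : Affine Γ .omega

/-- Finite (sub)distributions over terms. -/
abbrev TDist := Tm →₀ ℝ

/-- Big-step evaluation `M ⇓ D`. -/
inductive BigStep : Tm → TDist → Prop where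
  | omega : BigStep .omega 0
  | val {x : ℕ} {M : Tm} : BigStep (.lam x M) (Finsupp.single (.lam x M) 1)
  | choice {M N : Tm} {D E : TDist} : BigStep M D → BigStep N E →
      BigStep (.choice M N) ((1 / 2 : ℝ) • D + (1 / 2 : ℝ) • E)
  | app {M N : Tm} {D E : TDist} {F : Tm → Tm → TDist} {bv : Tm → ℕ} {bd : Tm → Tm} :
      BigStep M D → BigStep N E →
      (∀ f ∈ D.support, f = Tm.lam (bv f) (bd f)) →
      (∀ f ∈ D.support, ∀ v ∈ E.support, BigStep (Tm.subst (bv f) v (bd f)) (F f v)) →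
      BigStep (.app M N) (D.sum fun f p => E.sum fun v q => (p * q) • F f v)

/-- The semantics of a term: the (unique) big-step result, if any. -/
def sem (M : Tm) : TDist := if h : ∃ D, BigStep M D then h.choose else 0

/-- Weight (total mass) of a subdistribution. -/
def wt (D : TDist) : ℝ := D.sum fun _ p => p

/-- Probability that a term accepts a trace (a list of value arguments). -/
def Pr : List Tm → Tm → ℝ
  | [] => fun M => wt (sem M)
  | V :: s => fun M => (sem M).sum fun W p =>
      p * (match W with
           | Tm.lam x body => Pr s (Tm.subst x V body)
           | _ => 0)

/-- The trace distance. -/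
def deltaTr (M N : Tm) : ℝ := ⨆ s : List Tm, |Pr s M - Pr s N|

/-- Valid Howe judgements `Γ ⊢ M μ^H N : ε` for the affine probabilistic
λ-calculus, built on top of a metric `μ` on terms. -/
inductive Howe (μ : Tm → Tm → ℝ) : Finset ℕ → Tm → Tm → ℝ → Prop where
  | var {Γ : Finset ℕ} {x : ℕ} {M : Tm} {ε : ℝ} :
      μ (.var x) M ≤ ε → Affine (insert x Γ) M →
      Howe μ (insert x Γ) (.var x) M ε
  | omega {Γ : Finset ℕ} {M : Tm} {ε : ℝ} :
      μ .omega M ≤ ε → Affine Γ M → Howe μ Γ .omega M ε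
  | app {Γ Δ : Finset ℕ} {M N K T L : Tm} {ε γ ι : ℝ} :
      Disjoint Γ Δ → Howe μ Γ M K ε → Howe μ Δ N T γ →
      μ (.app K T) L ≤ ι → Affine (Γ ∪ Δ) L →
      Howe μ (Γ ∪ Δ) (.app M N) L (ε + γ + ι)
  | choice {Γ : Finset ℕ} {M N K T L : Tm} {ε ι γ : ℝ} :
      Howe μ Γ M K ε → Howe μ Γ N T ι →
      μ (.choice K T) L ≤ γ → Affine Γ L →
      Howe μ Γ (.choice M N) L ((ε + ι) / 2 + γ)
  | lam {Γ : Finset ℕ} {x : ℕ} {M K L : Tm} {ε ι : ℝ} :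
      Howe μ (insert x Γ) M K ε → μ (.lam x K) L ≤ ι → Affine Γ L →
      Howe μ Γ (.lam x M) L (ε + ι)

/-- The Howe lifting of `μ`: the infimum of the achievable `ε`'s (and `1` if
there is none). -/
def howe (μ : Tm → Tm → ℝ) (M N : Tm) : ℝ :=
  sInf ({ε | ∃ Γ, Howe μ Γ M N ε} ∪ {1})

/-- Premetric on terms: `[0,1]`-valued and vanishing on the diagonal. -/
def IsPremetricT (μ : Tm → Tm → ℝ) : Prop :=
  (∀ M N, 0 ≤ μ M N) ∧ (∀ M N, μ M N ≤ 1) ∧ ∀ M, μ M M = 0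

/-- Pseudometric on terms. -/
def IsPseudoT (μ : Tm → Tm → ℝ) : Prop :=
  IsPremetricT μ ∧ (∀ M N, μ M N = μ N M) ∧ ∀ M N L, μ M N ≤ μ M L + μ L N

/-- Values of the calculus are closed abstractions. -/
def Tm.IsClosedVal (V : Tm) : Prop := (∃ x M, V = Tm.lam x M) ∧ Affine ∅ V

/-! ### Auxiliary lemmas -/

/-- Free variables of a term. -/
def Tm.fv : Tm → Finset ℕ
  | .var y => {y}
  | .lam y M => M.fv.erase y
  | .app M N => M.fv ∪ N.fv
  | .choice M N => M.fv ∪ N.fv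
  | .omega => ∅

lemma subst_of_not_mem_fv {x : ℕ} {V M : Tm} (h : x ∉ M.fv) : Tm.subst x V M = M := by
  induction M with
  | var y =>
    simp [Tm.fv] at h
    simp [Tm.subst, Ne.symm h]
  | lam y M ih =>
    by_cases hxy : y = x
    · simp [Tm.subst, hxy]
    · simp [Tm.fv, Finset.mem_erase] at h
      simp [Tm.subst, hxy, ih (fun hx => h (Ne.symm hxy) hx)]
  | app M N ih1 ih2 =>
    simp [Tm.fv] at h
    simp [Tm.subst, ih1 h.1, ih2 h.2]
  | choice M N ih1 ih2 =>
    simp [Tm.fv] at h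
    simp [Tm.subst, ih1 h.1, ih2 h.2]
  | omega => simp [Tm.subst]

lemma affine_fv {Γ : Finset ℕ} {M : Tm} (h : Affine Γ M) : M.fv ⊆ Γ := by
  induction h with
  | var hx => simpa [Tm.fv]
  | lam _ ih =>
    intro a ha
    simp [Tm.fv, Finset.mem_erase] at ha
    rcases Finset.mem_insert.1 (ih ha.2) with h' | h'
    · exact absurd h' ha.1
    · exact h'
  | app _ _ _ ih1 ih2 =>
    simp only [Tm.fv]
    exact Finset.union_subset_union ih1 ih2
  | choice _ _ ih1 ih2 =>
    simp only [Tm.fv]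
    exact Finset.union_subset ih1 ih2
  | omega => simp [Tm.fv]

lemma affine_of_fv {Γ : Finset ℕ} {M : Tm} (h : Affine Γ M) :
    ∀ Γ' : Finset ℕ, M.fv ⊆ Γ' → Affine Γ' M := by
  induction h with
  | var hx =>
    intro Γ' hs
    exact Affine.var (hs (by simp [Tm.fv]))
  | @lam Γ y M _ ih =>
    intro Γ' hs
    refine Affine.lam (ih _ ?_)
    intro a ha
    by_cases hay : a = y
    · exact hay ▸ Finset.mem_insert_self _ _
    · exact Finset.mem_insert_of_mem (hs (by simp [Tm.fv, Finset.mem_erase, hay, ha]))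
  | @app Γ Δ M N hdis hM hN ih1 ih2 =>
    intro Γ' hs
    have hMfv : M.fv ⊆ Γ' \ N.fv := by
      intro a ha
      refine Finset.mem_sdiff.2 ⟨hs (by simp [Tm.fv, ha]), fun hb => ?_⟩
      exact (Finset.disjoint_left.1 hdis) (affine_fv hM ha) (affine_fv hN hb)
    have hNfv : N.fv ⊆ Γ' := fun a ha => hs (by simp [Tm.fv, ha])
    have := Affine.app (Finset.sdiff_disjoint) (ih1 _ hMfv) (ih2 _ (le_refl N.fv))
    rwa [Finset.sdiff_union_of_subset hNfv] at this
  | @choice Γ M N _ _ ih1 ih2 =>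
    intro Γ' hs
    simp only [Tm.fv] at hs
    exact Affine.choice (ih1 _ ((Finset.subset_union_left).trans hs))
      (ih2 _ ((Finset.subset_union_right).trans hs))
  | omega => intro Γ' _; exact Affine.omega

lemma affine_weaken {Γ Γ' : Finset ℕ} {M : Tm} (h : Affine Γ M) (hs : Γ ⊆ Γ') :
    Affine Γ' M :=
  affine_of_fv h Γ' ((affine_fv h).trans hs)

lemma affine_subst {Γ : Finset ℕ} {M : Tm} {x : ℕ} {V : Tm}
    (h : Affine Γ M) (hV : Affine ∅ V) : Affine (Γ.erase x) (Tm.subst x V M) := by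
  induction h with
  | @var Γ y hy =>
    by_cases hyx : y = x
    · simpa [Tm.subst, hyx] using affine_weaken hV (Finset.empty_subset _)
    · simpa [Tm.subst, hyx] using Affine.var (Finset.mem_erase.2 ⟨hyx, hy⟩)
  | @lam Γ y M hM ih =>
    by_cases hyx : y = x
    · subst hyx
      simp only [Tm.subst, if_pos rfl]
      refine Affine.lam (affine_weaken hM ?_)
      intro a ha
      rcases Finset.mem_insert.1 ha with h' | h'
      · exact h' ▸ Finset.mem_insert_self _ _
      · by_cases hay : a = y
        · exact hay ▸ Finset.mem_insert_self _ _
        · exact Finset.mem_insert_of_mem (Finset.mem_erase.2 ⟨hay, h'⟩)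
    · simp only [Tm.subst, if_neg hyx]
      refine Affine.lam ?_
      rw [← Finset.erase_insert_of_ne hyx]
      exact ih
  | @app Γ Δ M N hdis hM hN ih1 ih2 =>
    simp only [Tm.subst]
    rw [Finset.erase_union_distrib]
    exact Affine.app (hdis.mono (Finset.erase_subset _ _) (Finset.erase_subset _ _)) ih1 ih2
  | choice _ _ ih1 ih2 => exact Affine.choice ih1 ih2
  | omega => exact Affine.omega

lemma howe_cast {μ : Tm → Tm → ℝ} {Γ : Finset ℕ} {M N : Tm} {a b : ℝ}
    (h : Howe μ Γ M N a) (e : a = b) : Howe μ Γ M N b := e ▸ h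

lemma howe_nonneg {μ : Tm → Tm → ℝ} (hp : ∀ M N, 0 ≤ μ M N)
    {Γ : Finset ℕ} {M N : Tm} {ε : ℝ} (h : Howe μ Γ M N ε) : 0 ≤ ε := by
  induction h with
  | var hμ _ => exact le_trans (hp _ _) hμ
  | omega hμ _ => exact le_trans (hp _ _) hμ
  | app _ _ _ hμ _ ih1 ih2 => have := le_trans (hp _ _) hμ; linarith
  | choice _ _ hμ _ ih1 ih2 => have := le_trans (hp _ _) hμ; linarith
  | lam _ hμ _ ih => have := le_trans (hp _ _) hμ; linarith

lemma howe_mono {μ : Tm → Tm → ℝ} {Γ : Finset ℕ} {M N : Tm} {ε ε' : ℝ}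
    (h : Howe μ Γ M N ε) (hle : ε ≤ ε') : Howe μ Γ M N ε' := by
  obtain ⟨c, rfl, hc⟩ : ∃ c, ε' = ε + c ∧ 0 ≤ c := ⟨ε' - ε, by ring, by linarith⟩
  cases h with
  | var hμ hA => exact Howe.var (hμ.trans (le_add_of_nonneg_right hc)) hA
  | omega hμ hA => exact Howe.omega (hμ.trans (le_add_of_nonneg_right hc)) hA
  | app hdis h1 h2 hμ hA =>
    exact howe_cast (Howe.app hdis h1 h2 (hμ.trans (le_add_of_nonneg_right hc)) hA) (by ring)
  | choice h1 h2 hμ hA =>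
    exact howe_cast (Howe.choice h1 h2 (hμ.trans (le_add_of_nonneg_right hc)) hA) (by ring)
  | lam h1 hμ hA =>
    exact howe_cast (Howe.lam h1 (hμ.trans (le_add_of_nonneg_right hc)) hA) (by ring)

lemma howe_affine_left {μ : Tm → Tm → ℝ} {Γ : Finset ℕ} {M N : Tm} {ε : ℝ}
    (h : Howe μ Γ M N ε) : Affine Γ M := by
  induction h with
  | var _ _ => exact Affine.var (Finset.mem_insert_self _ _)
  | omega _ _ => exact Affine.omega
  | app hdis _ _ _ _ ih1 ih2 => exact Affine.app hdis ih1 ih2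
  | choice _ _ _ _ ih1 ih2 => exact Affine.choice ih1 ih2
  | lam _ _ _ ih => exact Affine.lam ih

lemma howe_affine_right {μ : Tm → Tm → ℝ} {Γ : Finset ℕ} {M N : Tm} {ε : ℝ}
    (h : Howe μ Γ M N ε) : Affine Γ N := by
  cases h with
  | var _ hA => exact hA
  | omega _ hA => exact hA
  | app _ _ _ _ hA => exact hA
  | choice _ _ _ hA => exact hA
  | lam _ _ hA => exact hA

lemma howe_weaken {μ : Tm → Tm → ℝ} {Γ : Finset ℕ} {M N : Tm} {ε : ℝ}
    (h : Howe μ Γ M N ε) : ∀ {Γ' : Finset ℕ}, Γ ⊆ Γ' → Howe μ Γ' M N ε := by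
  induction h with
  | @var Γ y M ε hμ hA =>
    intro Γ' hs
    have hy : y ∈ Γ' := hs (Finset.mem_insert_self _ _)
    have : Howe μ (insert y (Γ'.erase y)) (.var y) M ε :=
      Howe.var hμ (affine_weaken hA (by rw [Finset.insert_erase hy]; exact hs))
    rwa [Finset.insert_erase hy] at this
  | omega hμ hA => intro Γ' hs; exact Howe.omega hμ (affine_weaken hA hs)
  | @app Γ Δ M N K T L ε γ ι hdis h1 h2 hμ hA ih1 ih2 =>
    intro Γ' hs
    have hΔ : Δ ⊆ Γ' := Finset.subset_union_right.trans hs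
    have hΓ : Γ ⊆ Γ' \ Δ := by
      intro a ha
      exact Finset.mem_sdiff.2 ⟨hs (Finset.mem_union_left _ ha),
        Finset.disjoint_left.1 hdis ha⟩
    have : Howe μ ((Γ' \ Δ) ∪ Δ) (.app M N) L (ε + γ + ι) :=
      Howe.app Finset.sdiff_disjoint (ih1 hΓ) (ih2 (le_refl Δ)) hμ
        (by rw [Finset.sdiff_union_of_subset hΔ]; exact affine_weaken hA hs)
    rwa [Finset.sdiff_union_of_subset hΔ] at this
  | choice h1 h2 hμ hA ih1 ih2 =>
    intro Γ' hs
    exact Howe.choice (ih1 hs) (ih2 hs) hμ (affine_weaken hA hs)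
  | @lam Γ y M K L ε ι h1 hμ hA ih =>
    intro Γ' hs
    exact Howe.lam (ih (Finset.insert_subset_insert _ hs)) hμ (affine_weaken hA hs)

lemma howe_refl {μ : Tm → Tm → ℝ} (hrefl : ∀ M, μ M M = 0)
    {Γ : Finset ℕ} {M : Tm} (h : Affine Γ M) : Howe μ Γ M M 0 := by
  induction h with
  | @var Γ y hy =>
    have : Howe μ (insert y (Γ.erase y)) (.var y) (.var y) 0 :=
      Howe.var (le_of_eq (hrefl _)) (Affine.var (Finset.mem_insert_self _ _))
    rwa [Finset.insert_erase hy] at this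
  | @lam Γ y M hM ih =>
    exact howe_cast (Howe.lam ih (le_of_eq (hrefl _)) (Affine.lam hM)) (by ring)
  | @app Γ Δ M N hdis hM hN ih1 ih2 =>
    exact howe_cast (Howe.app hdis ih1 ih2 (le_of_eq (hrefl _))
      (Affine.app hdis hM hN)) (by ring)
  | @choice Γ M N hM hN ih1 ih2 =>
    exact howe_cast (Howe.choice ih1 ih2 (le_of_eq (hrefl _))
      (Affine.choice hM hN)) (by ring)
  | omega => exact Howe.omega (le_of_eq (hrefl _)) Affine.omega

lemma howe_comp_right {μ : Tm → Tm → ℝ}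
    (htri : ∀ M N L, μ M N ≤ μ M L + μ L N)
    {Γ : Finset ℕ} {M N L : Tm} {ε ι : ℝ}
    (h : Howe μ Γ M N ε) (hμ2 : μ N L ≤ ι) (hA : Affine Γ L) :
    Howe μ Γ M L (ε + ι) := by
  cases h with
  | var hμ' hA' => exact Howe.var ((htri _ L N).trans (add_le_add hμ' hμ2)) hA
  | omega hμ' hA' => exact Howe.omega ((htri _ L N).trans (add_le_add hμ' hμ2)) hA
  | app hdis h1 h2 hμ' hA' =>
    exact howe_cast (Howe.app hdis h1 h2
      ((htri _ L N).trans (add_le_add hμ' hμ2)) hA) (by ring)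
  | choice h1 h2 hμ' hA' =>
    exact howe_cast (Howe.choice h1 h2
      ((htri _ L N).trans (add_le_add hμ' hμ2)) hA) (by ring)
  | lam h1 hμ' hA' =>
    exact howe_cast (Howe.lam h1
      ((htri _ L N).trans (add_le_add hμ' hμ2)) hA) (by ring)

/-- Key substitution lemma for Howe derivations. -/
lemma howe_subst (μ : Tm → Tm → ℝ) (h : IsPseudoT μ)
    (hsub : ∀ (M N : Tm) (x : ℕ) (V : Tm), V.IsClosedVal →
      μ (Tm.subst x V M) (Tm.subst x V N) ≤ μ M N)
    {x : ℕ} {V W : Tm} {δ : ℝ} (hVW : Howe μ ∅ V W δ)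
    (hV : V.IsClosedVal) (hW : W.IsClosedVal) :
    ∀ {Γ : Finset ℕ} {M N : Tm} {ε : ℝ}, Howe μ Γ M N ε →
      Howe μ (Γ.erase x) (Tm.subst x V M) (Tm.subst x W N) (ε + δ) := by
  have hδ : 0 ≤ δ := howe_nonneg h.1.1 hVW
  intro Γ M N ε hMN
  induction hMN with
  | @var Γ y M ε hμ hA =>
    by_cases hyx : y = x
    · subst hyx
      have h1 : Howe μ ((insert y Γ).erase y) V W δ :=
        howe_weaken hVW (Finset.empty_subset _)
      have h2 : μ W (Tm.subst y W M) ≤ ε := by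
        have := hsub (.var y) M y W hW
        simpa [Tm.subst] using this.trans hμ
      have := howe_comp_right h.2.2 h1 h2 (affine_subst hA hW.2)
      simpa [Tm.subst, add_comm δ ε] using this
    · have hμ' : μ (.var y) (Tm.subst x W M) ≤ ε + δ := by
        have := hsub (.var y) M x W hW
        simp only [Tm.subst, if_neg hyx] at this
        linarith [this.trans hμ]
      have hA' : Affine ((insert y Γ).erase x) (Tm.subst x W M) := affine_subst hA hW.2
      rw [Finset.erase_insert_of_ne hyx] at hA' ⊢
      simpa [Tm.subst, hyx] using Howe.var hμ' hA'
  | @omega Γ M ε hμ hA =>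
    have hμ' : μ .omega (Tm.subst x W M) ≤ ε + δ := by
      have := hsub .omega M x W hW
      simp only [Tm.subst] at this
      linarith [this.trans hμ]
    simpa [Tm.subst] using Howe.omega hμ' (affine_subst hA hW.2)
  | @app Γ Δ M N K T L ε γ ι hdis h1 h2 hμ hA ih1 ih2 =>
    have hμ' : μ (.app (Tm.subst x W K) (Tm.subst x W T)) (Tm.subst x W L) ≤ ι := by
      have := hsub (.app K T) L x W hW
      simp only [Tm.subst] at this
      exact this.trans hμ
    by_cases hxΔ : x ∈ Δ
    · have hxΓ : x ∉ Γ := fun hx => Finset.disjoint_left.1 hdis hx hxΔ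
      have hMe : Tm.subst x V M = M :=
        subst_of_not_mem_fv (fun hx => hxΓ (affine_fv (howe_affine_left h1) hx))
      have hKe : Tm.subst x W K = K :=
        subst_of_not_mem_fv (fun hx => hxΓ (affine_fv (howe_affine_right h1) hx))
      have hdis' : Disjoint Γ (Δ.erase x) := hdis.mono_right (Finset.erase_subset _ _)
      have hA' : Affine (Γ ∪ Δ.erase x) (Tm.subst x W L) := by
        have h3 := affine_subst (x := x) hA hW.2
        rwa [Finset.erase_union_distrib, Finset.erase_eq_of_notMem hxΓ] at h3
      have h1' : Howe μ Γ (Tm.subst x V M) (Tm.subst x W K) ε := by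
        rw [hMe, hKe]; exact h1
      rw [Finset.erase_union_distrib, Finset.erase_eq_of_notMem hxΓ]
      simpa only [Tm.subst] using howe_cast (Howe.app hdis' h1' ih2 hμ' hA') (by ring)
    · have hNe : Tm.subst x V N = N :=
        subst_of_not_mem_fv (fun hx => hxΔ (affine_fv (howe_affine_left h2) hx))
      have hTe : Tm.subst x W T = T :=
        subst_of_not_mem_fv (fun hx => hxΔ (affine_fv (howe_affine_right h2) hx))
      have hdis' : Disjoint (Γ.erase x) Δ := hdis.mono_left (Finset.erase_subset _ _)
      have hA' : Affine (Γ.erase x ∪ Δ) (Tm.subst x W L) := by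
        have h3 := affine_subst (x := x) hA hW.2
        rwa [Finset.erase_union_distrib, Finset.erase_eq_of_notMem hxΔ] at h3
      have h2' : Howe μ Δ (Tm.subst x V N) (Tm.subst x W T) γ := by
        rw [hNe, hTe]; exact h2
      rw [Finset.erase_union_distrib, Finset.erase_eq_of_notMem hxΔ]
      simpa only [Tm.subst] using howe_cast (Howe.app hdis' ih1 h2' hμ' hA') (by ring)
  | @choice Γ M N K T L ε ι γ h1 h2 hμ hA ih1 ih2 =>
    have hμ' : μ (.choice (Tm.subst x W K) (Tm.subst x W T)) (Tm.subst x W L) ≤ γ := by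
      have := hsub (.choice K T) L x W hW
      simp only [Tm.subst] at this
      exact this.trans hμ
    have := Howe.choice ih1 ih2 hμ' (affine_subst hA hW.2)
    simpa only [Tm.subst] using howe_cast this (by ring)
  | @lam Γ y M K L ε ι h1 hμ hA ih =>
    by_cases hyx : y = x
    · subst hyx
      have hμ' : μ (.lam y K) (Tm.subst y W L) ≤ ι + δ := by
        have := hsub (.lam y K) L y W hW
        simp only [Tm.subst, if_pos rfl, if_true, eq_self_iff_true] at this
        linarith [this.trans hμ]
      have h1' : Howe μ (insert y (Γ.erase y)) M K ε :=
        howe_weaken h1 (by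
          intro a ha
          rcases Finset.mem_insert.1 ha with h' | h'
          · exact h' ▸ Finset.mem_insert_self _ _
          · by_cases hay : a = y
            · exact hay ▸ Finset.mem_insert_self _ _
            · exact Finset.mem_insert_of_mem (Finset.mem_erase.2 ⟨hay, h'⟩))
      have := Howe.lam h1' hμ' (affine_subst hA hW.2)
      simpa only [Tm.subst, if_pos rfl, if_true] using howe_cast this (by ring)
    · have hμ' : μ (.lam y (Tm.subst x W K)) (Tm.subst x W L) ≤ ι := by
        have := hsub (.lam y K) L x W hW
        simp only [Tm.subst, if_neg hyx] at this
        exact this.trans hμ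
      rw [Finset.erase_insert_of_ne hyx] at ih
      have := Howe.lam ih hμ' (affine_subst hA hW.2)
      simpa only [Tm.subst, if_neg hyx] using howe_cast this (by ring)

/-- Any Howe derivation between closed terms can be closed to the empty context. -/
lemma howe_close (μ : Tm → Tm → ℝ) (h : IsPseudoT μ)
    (hsub : ∀ (M N : Tm) (x : ℕ) (V : Tm), V.IsClosedVal →
      μ (Tm.subst x V M) (Tm.subst x V N) ≤ μ M N)
    {V W : Tm} {δ : ℝ} (hV : Affine ∅ V) (hW : Affine ∅ W) :
    ∀ Γ : Finset ℕ, Howe μ Γ V W δ → Howe μ ∅ V W δ := by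
  intro Γ
  induction Γ using Finset.strongInductionOn with
  | _ Γ ih =>
    intro hd
    rcases Finset.eq_empty_or_nonempty Γ with rfl | ⟨y, hy⟩
    · exact hd
    · have hU : Tm.IsClosedVal (.lam 0 .omega) := ⟨⟨0, .omega, rfl⟩, Affine.lam Affine.omega⟩
      have hrefl : Howe μ ∅ (.lam 0 .omega) (.lam 0 .omega) 0 :=
        howe_refl h.1.2.2 hU.2
      have := howe_subst μ h hsub (x := y) hrefl hU hU hd
      rw [subst_of_not_mem_fv (fun hx => (Finset.notMem_empty y) (affine_fv hV hx)),
        subst_of_not_mem_fv (fun hx => (Finset.notMem_empty y) (affine_fv hW hx)),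
        add_zero] at this
      exact ih (Γ.erase y) (Finset.erase_ssubset hy) this

/-- pseudo-substitutivity of the Howe lifting: if `μ` is
value-substitutive, then
`μ^H(M[V/x], N[W/x]) ≤ μ^H(M,N) + μ^H(V,W)` for all values `V`, `W`. -/
theorem howe_pseudo_substitutive (μ : Tm → Tm → ℝ) (h : IsPseudoT μ)
    (hsub : ∀ (M N : Tm) (x : ℕ) (V : Tm), V.IsClosedVal →
      μ (Tm.subst x V M) (Tm.subst x V N) ≤ μ M N)
    (M N : Tm) (x : ℕ) (V W : Tm) (hV : V.IsClosedVal) (hW : W.IsClosedVal) :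
    howe μ (Tm.subst x V M) (Tm.subst x W N) ≤ howe μ M N + howe μ V W := by
  obtain ⟨⟨hnn, hle1, hrefl⟩, hsymm, htri⟩ := h
  have hps : IsPseudoT μ := ⟨⟨hnn, hle1, hrefl⟩, hsymm, htri⟩
  have hbdd : ∀ A B : Tm, BddBelow ({ε | ∃ Γ, Howe μ Γ A B ε} ∪ {1}) := by
    intro A B
    refine ⟨0, fun c hc => ?_⟩
    rcases hc with ⟨Γ, hΓ⟩ | hc
    · exact howe_nonneg hnn hΓ
    · rw [Set.mem_singleton_iff] at hc
      rw [hc]; norm_num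
  have hnonneg : ∀ (A B : Tm) (c : ℝ), c ∈ ({ε | ∃ Γ, Howe μ Γ A B ε} ∪ {1}) → 0 ≤ c := by
    intro A B c hc
    rcases hc with ⟨Γ, hΓ⟩ | hc
    · exact howe_nonneg hnn hΓ
    · rw [Set.mem_singleton_iff] at hc
      rw [hc]; norm_num
  unfold howe
  have key : ∀ a ∈ ({ε | ∃ Γ, Howe μ Γ M N ε} ∪ {1}),
      ∀ b ∈ ({ε | ∃ Γ, Howe μ Γ V W ε} ∪ {1}),
      sInf ({ε | ∃ Γ, Howe μ Γ (Tm.subst x V M) (Tm.subst x W N) ε} ∪ {1}) ≤ a + b := by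
    intro a ha b hb
    have h1mem : (1 : ℝ) ∈ ({ε | ∃ Γ, Howe μ Γ (Tm.subst x V M) (Tm.subst x W N) ε} ∪ {1}) :=
      Or.inr rfl
    rcases ha with ⟨Γ1, hd1⟩ | ha1
    · rcases hb with ⟨Γ2, hd2⟩ | hb1
      · have hc := howe_close μ hps hsub hV.2 hW.2 Γ2 hd2
        have hfin := howe_subst μ hps hsub (x := x) hc hV hW hd1
        exact csInf_le (hbdd _ _) (Or.inl ⟨_, hfin⟩)
      · rw [Set.mem_singleton_iff] at hb1
        have ha0 : 0 ≤ a := howe_nonneg hnn hd1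
        have h3 := csInf_le (hbdd _ _) h1mem
        rw [hb1]; linarith
    · rw [Set.mem_singleton_iff] at ha1
      have hb0 : 0 ≤ b := hnonneg _ _ _ hb
      have h3 := csInf_le (hbdd _ _) h1mem
      rw [ha1]; linarith
  have h2 : sInf ({ε | ∃ Γ, Howe μ Γ (Tm.subst x V M) (Tm.subst x W N) ε} ∪ {1}) -
      sInf ({ε | ∃ Γ, Howe μ Γ V W ε} ∪ {1}) ≤ sInf ({ε | ∃ Γ, Howe μ Γ M N ε} ∪ {1}) := by
    refine le_csInf ⟨1, Or.inr rfl⟩ (fun a ha => ?_)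
    have h4 : sInf ({ε | ∃ Γ, Howe μ Γ (Tm.subst x V M) (Tm.subst x W N) ε} ∪ {1}) - a ≤
        sInf ({ε | ∃ Γ, Howe μ Γ V W ε} ∪ {1}) :=
      le_csInf ⟨1, Or.inr rfl⟩ (fun b hb => by linarith [key a ha b hb])
    linarith
  linarith [h2]

end
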